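/- arXiv:1908.01455 — 8 statements merged into one kernel-verified Lean document; each statement's English description precedes it below -/
import Mathlib

section
/- Let R and S be disjoint finite sets with |R| = f₂ and |S| = nf₂ ≥ 1, and let M be a multiset of messages, each assigned a receiver in R ∪ S, such that every element of R receives at least as many messages as every element of S (R is the set of top-f₂ receivers). Let q = (f₁+1) / nf₂ and r = (f₁+1) mod nf₂, and suppose the total number of messages |M| ≤ q·(f₂+nf₂) + r + f₂·sgn(r) − 1. Then the number of messages received by elements of S is at most f₁. -/
lemma card_filter_mem_eq_sum {ι : Type*} [DecidableEq ι] (M : Multiset ι) (T : Finset ι) :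
    Multiset.card (M.filter (· ∈ T)) = ∑ y ∈ T, M.count y := by
  rw [← Multiset.toFinset_sum_count_eq]
  rw [Finset.sum_subset (by
    intro x hx
    exact (Multiset.mem_filter.mp (Multiset.mem_toFinset.mp hx)).2)]
  · exact Finset.sum_congr rfl fun y hy => by simp [Multiset.count_filter, hy]
  · intro x hx hnx
    rw [Multiset.count_eq_zero]
    intro hmem
    exact hnx (Multiset.mem_toFinset.mpr
      (Multiset.mem_filter.mpr ⟨(Multiset.mem_filter.mp hmem).1, hx⟩))

/-- key counting step of Theorem 4.1. -/
theorem stmt_1 {ι : Type*} [DecidableEq ι] (f₁ f₂ nf₂ : ℕ) (hnf : 1 ≤ nf₂)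
    (R S : Finset ι) (hdisj : Disjoint R S) (hR : R.card = f₂) (hS : S.card = nf₂)
    (M : Multiset ι) (hM : ∀ x ∈ M, x ∈ R ∪ S)
    (htop : ∀ x ∈ R, ∀ y ∈ S, M.count y ≤ M.count x)
    (q r : ℕ) (hq : q = (f₁ + 1) / nf₂) (hr : r = (f₁ + 1) % nf₂)
    (hcard : Multiset.card M ≤ q * (f₂ + nf₂) + r + f₂ * (if 0 < r then 1 else 0) - 1) :
    Multiset.card (M.filter (· ∈ S)) ≤ f₁ := by
  by_contra hcon
  push_neg at hcon
  have hdiv : nf₂ * q + r = f₁ + 1 := by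
    rw [hq, hr]; exact Nat.div_add_mod (f₁ + 1) nf₂
  have hrlt : r < nf₂ := by rw [hr]; exact Nat.mod_lt _ hnf
  set c : ℕ := q + (if 0 < r then 1 else 0) with hc
  -- S receives at least f₁+1 messages
  have hSsum : f₁ + 1 ≤ ∑ y ∈ S, M.count y := by
    rw [← card_filter_mem_eq_sum]; omega
  -- c ≥ 1
  have hc1 : 1 ≤ c := by
    rcases Nat.eq_zero_or_pos r with h0 | hpos
    · rcases Nat.eq_zero_or_pos q with hq0 | hqp
      · exfalso; rw [hq0, h0] at hdiv; simp at hdiv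
      · omega
    · simp [hc, hpos]
  obtain ⟨d, hd⟩ : ∃ d, c = d + 1 := ⟨c - 1, by omega⟩
  -- some y in S has count ≥ c
  have hex : ∃ y ∈ S, c ≤ M.count y := by
    by_contra hall
    push_neg at hall
    have hbound : ∑ y ∈ S, M.count y ≤ ∑ _y ∈ S, d :=
      Finset.sum_le_sum (fun y hy => by have := hall y hy; omega)
    rw [Finset.sum_const, hS, smul_eq_mul] at hbound
    -- show nf₂ * d ≤ f₁
    rcases Nat.eq_zero_or_pos r with h0 | hpos
    · have hcd : q = d + 1 := by simp [hc, h0] at hd; omega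
      have : nf₂ * q = nf₂ * d + nf₂ := by rw [hcd]; ring
      omega
    · have hcd : q = d := by simp [hc, hpos] at hd; omega
      have : nf₂ * q = nf₂ * d := by rw [hcd]
      omega
  obtain ⟨y, hy, hyc⟩ := hex
  -- each x in R has count ≥ c
  have hRsum : f₂ * c ≤ ∑ x ∈ R, M.count x := by
    calc f₂ * c = ∑ _x ∈ R, c := by rw [Finset.sum_const, hR, smul_eq_mul]
    _ ≤ ∑ x ∈ R, M.count x :=
        Finset.sum_le_sum (fun x hx => le_trans hyc (htop x hx y hy))
  -- split total card
  have hsplit : Multiset.card (M.filter (· ∈ R)) + Multiset.card (M.filter (· ∈ S))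
      = Multiset.card M := by
    rw [← Multiset.card_add, Multiset.filter_add_filter]
    have h1 : Multiset.filter (fun a => a ∈ R ∨ a ∈ S) M = M :=
      Multiset.filter_eq_self.mpr fun a ha => by
        simpa [Finset.mem_union] using hM a ha
    have h2 : Multiset.filter (fun a => a ∈ R ∧ a ∈ S) M = 0 :=
      Multiset.filter_eq_nil.mpr fun a _ h =>
        Finset.disjoint_left.mp hdisj h.1 h.2
    rw [h1, h2, add_zero]
  rw [card_filter_mem_eq_sum, card_filter_mem_eq_sum] at hsplit
  have hlow : f₂ * c + (f₁ + 1) ≤ Multiset.card M := by omega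
  have e2 : q * (f₂ + nf₂) = f₂ * q + nf₂ * q := by ring
  rcases Nat.eq_zero_or_pos r with h0 | hpos
  · have hcq : f₂ * c = f₂ * q := by simp [hc, h0]
    simp only [h0, lt_irrefl, if_false, mul_zero, add_zero] at hcard
    omega
  · have hcq : f₂ * c = f₂ * q + f₂ := by simp [hc, hpos]; ring
    simp only [hpos, if_pos, mul_one] at hcard
    omega
end

section
/- Let n₂ = f₂ + nf₂ with nf₂ ≥ 1, let β ≥ 1, q = β / nf₂, r = β mod nf₂, and α = q·n₂ + r + f₂·sgn(r). Suppose 𝒫 is a set of α senders partitioned into q blocks of size n₂ and one block of size r + f₂·sgn(r), and each block P is assigned an injection b_P into a set of n₂ receivers of which at most f₂ are faulty, the injections having pairwise disjoint images covering each block. If for each block at most f₂ (resp. at most f₂·sgn(r) for the remainder block) of its senders map to faulty receivers, then the number of senders mapping to non-faulty receivers is at least β. -/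
/-- counting inequality of Proposition 6.3 (SPBS). -/
theorem stmt_9 {ι κ : Type*} [DecidableEq ι] [DecidableEq κ]
    (f₂ nf₂ β : ℕ) (hnf : 1 ≤ nf₂) (hβ : 1 ≤ β)
    (q r : ℕ) (hq : q = β / nf₂) (hr : r = β % nf₂)
    (P : Finset ι)
    (hP : P.card = q * (f₂ + nf₂) + r + f₂ * (if 0 < r then 1 else 0))
    (blocks : Fin (q + 1) → Finset ι)
    (hdisj : ∀ i j, i ≠ j → Disjoint (blocks i) (blocks j))
    (hunion : Finset.univ.biUnion blocks = P)
    (hsize : ∀ i : Fin (q + 1), (i : ℕ) < q → (blocks i).card = f₂ + nf₂)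
    (hlast : (blocks (Fin.last q)).card = r + f₂ * (if 0 < r then 1 else 0))
    (b : ι → κ) (Fty : Finset κ)
    (hloss : ∀ i : Fin (q + 1), (i : ℕ) < q →
      ((blocks i).filter (fun x => b x ∈ Fty)).card ≤ f₂)
    (hlossLast : ((blocks (Fin.last q)).filter (fun x => b x ∈ Fty)).card ≤
      f₂ * (if 0 < r then 1 else 0)) :
    β ≤ (P.filter (fun x => b x ∉ Fty)).card := by
  have hβeq : β = q * nf₂ + r := by
    rw [hq, hr, Nat.mul_comm, Nat.div_add_mod]
  -- per-block lower bound
  have key : ∀ i : Fin (q + 1),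
      (blocks i).card - ((blocks i).filter (fun x => b x ∈ Fty)).card ≤
      ((blocks i).filter (fun x => b x ∉ Fty)).card := by
    intro i
    have := Finset.card_filter_add_card_filter_not
      (s := blocks i) (p := fun x => b x ∈ Fty)
    omega
  rw [← hunion, Finset.filter_biUnion]
  rw [Finset.card_biUnion (by
    intro i _ j _ hij
    exact (hdisj i j hij).mono (Finset.filter_subset _ _) (Finset.filter_subset _ _))]
  rw [Fin.sum_univ_castSucc]
  have hlastLB : r ≤ ((blocks (Fin.last q)).filter (fun x => b x ∉ Fty)).card := by
    have := key (Fin.last q)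
    omega
  have hfullLB : q * nf₂ ≤ ∑ i : Fin q,
      ((blocks i.castSucc).filter (fun x => b x ∉ Fty)).card := by
    calc q * nf₂ = ∑ _i : Fin q, nf₂ := by simp [mul_comm]
    _ ≤ _ := by
        apply Finset.sum_le_sum
        intro i _
        have hi : ((i.castSucc : Fin (q+1)) : ℕ) < q := by simp [i.isLt]
        have h1 := hsize i.castSucc hi
        have h2 := hloss i.castSucc hi
        have h3 := key i.castSucc
        omega
  omega
end

section
/- Let f₁ ≥ 0, β ≥ 1 with β = nf₁ − f₁ (so nf₁ = β + f₁), let q = (f₂+1)/β and r = (f₂+1) mod β. If a set T of receivers satisfies |T| ≥ (f₂+1) + q·f₁ + f₁·sgn(r) and at most f₂ elements of T are faulty, and T is covered by q + sgn(r) blocks, then the non-faulty part of T has size at least (q + sgn(r))·f₁ + 1, and hence by pigeonhole some block contains at least f₁ + 1 non-faulty elements of T. -/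
lemma stmt_11_pigeon {κ : Type*} [DecidableEq κ] (f₁ m : ℕ) (S : Finset κ)
    (blocks : Fin m → Finset κ) (hsub : S ⊆ Finset.univ.biUnion blocks)
    (hcard : m * f₁ + 1 ≤ S.card) : ∃ i, f₁ + 1 ≤ (S ∩ blocks i).card := by
  by_contra hcon
  push_neg at hcon
  have hall : ∀ i, (S ∩ blocks i).card ≤ f₁ := fun i => by have := hcon i; omega
  have hsub' : S ⊆ Finset.univ.biUnion (fun i => S ∩ blocks i) := by
    intro x hx
    obtain ⟨i, _, hi⟩ := Finset.mem_biUnion.mp (hsub hx)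
    exact Finset.mem_biUnion.mpr ⟨i, Finset.mem_univ i, Finset.mem_inter.mpr ⟨hx, hi⟩⟩
  have hle : S.card ≤ m * f₁ := by
    calc S.card ≤ (Finset.univ.biUnion (fun i => S ∩ blocks i)).card :=
          Finset.card_le_card hsub'
      _ ≤ ∑ i, (S ∩ blocks i).card := Finset.card_biUnion_le
      _ ≤ ∑ _i : Fin m, f₁ := Finset.sum_le_sum (fun i _ => hall i)
      _ = m * f₁ := by simp [Finset.sum_const, mul_comm]
  omega

/-- counting and pigeonhole step in Proposition 6.4 case 2 (RPBS-brs). -/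
theorem stmt_11 {κ : Type*} [DecidableEq κ] (f₁ f₂ nf₁ β : ℕ)
    (hβ : 1 ≤ β) (hβeq : β = nf₁ - f₁) (hnf : nf₁ = β + f₁)
    (q r : ℕ) (hq : q = (f₂ + 1) / β) (hr : r = (f₂ + 1) % β)
    (T F : Finset κ)
    (hT : (f₂ + 1) + q * f₁ + f₁ * (if 0 < r then 1 else 0) ≤ T.card)
    (hF : F ⊆ T) (hf : F.card ≤ f₂)
    (blocks : Fin (q + (if 0 < r then 1 else 0)) → Finset κ)
    (hcover : T ⊆ Finset.univ.biUnion blocks) :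
    (q + (if 0 < r then 1 else 0)) * f₁ + 1 ≤ (T \ F).card ∧
      ∃ i, f₁ + 1 ≤ ((T \ F) ∩ blocks i).card := by
  have hFcard : F.card ≤ T.card := Finset.card_le_card hF
  have hcardsd : (T \ F).card = T.card - F.card := Finset.card_sdiff_of_subset hF
  have hmul : (q + (if 0 < r then 1 else 0)) * f₁
      = q * f₁ + f₁ * (if 0 < r then 1 else 0) := by ring
  have h1 : (q + (if 0 < r then 1 else 0)) * f₁ + 1 ≤ (T \ F).card := by omega
  exact ⟨h1, stmt_11_pigeon f₁ _ (T \ F) blocks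
    (fun x hx => hcover (Finset.sdiff_subset hx)) h1⟩
end

section
/- Let n₁ = f₁ + nf₁, n₂ = f₂ + nf₂ with nf₂ ≥ 1 and n₁ ≥ n₂. Let q = (f₁+1)/nf₂, r = (f₁+1) mod nf₂, σ₁ = q·n₂ + r + f₂·sgn(r). Then for every multiset M of sender–receiver pairs (senders among the n₁ replicas, receivers among the n₂ replicas) with |M| = σ₁ − 1, there exist a set F₂ of f₂ receivers and a set F₁ of at most f₁ senders such that every pair in M has its receiver in F₂ or its sender in F₁. -/
/-- For any finset `s` and any `n ≤ s.card`, there is a subset `t` of size `n`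
consisting of "top" elements for `c`: every element of `t` has `c`-value at least
that of every element of `s \ t`. -/
lemma exists_top_subset {κ : Type*} [DecidableEq κ] (c : κ → ℕ) :
    ∀ (n : ℕ) (s : Finset κ), n ≤ s.card →
      ∃ t, t ⊆ s ∧ t.card = n ∧ ∀ x ∈ t, ∀ z ∈ s \ t, c z ≤ c x := by
  intro n
  induction n with
  | zero =>
      intro s _
      exact ⟨∅, by simp, by simp, by simp⟩
  | succ m ih =>
      intro s hn
      obtain ⟨t, hts, htc, htop⟩ := ih s (le_trans (Nat.le_succ m) hn)
      have hne : (s \ t).Nonempty := by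
        rw [← Finset.card_pos, Finset.card_sdiff_of_subset hts]
        omega
      obtain ⟨y, hy, hmax⟩ := Finset.exists_max_image (s \ t) c hne
      have hys : y ∈ s := (Finset.mem_sdiff.mp hy).1
      have hyt : y ∉ t := (Finset.mem_sdiff.mp hy).2
      refine ⟨insert y t, ?_, ?_, ?_⟩
      · exact Finset.insert_subset hys hts
      · rw [Finset.card_insert_of_notMem hyt, htc]
      · intro x hx z hz
        have hz' : z ∈ s \ t := by
          rw [Finset.mem_sdiff] at hz ⊢
          exact ⟨hz.1, fun h => hz.2 (Finset.mem_insert_of_mem h)⟩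
        rcases Finset.mem_insert.mp hx with hxy | hxt
        · subst hxy; exact hmax z hz'
        · exact htop x hxt z hz'

/-- adversarial covering at the heart of Theorem 4.1. -/
theorem stmt_12 {ι κ : Type*} [DecidableEq ι] [DecidableEq κ]
    (f₁ nf₁ f₂ nf₂ n₁ n₂ : ℕ) (hn₁ : n₁ = f₁ + nf₁) (hn₂ : n₂ = f₂ + nf₂)
    (hnf₂ : 1 ≤ nf₂) (hsize : n₂ ≤ n₁)
    (q r σ₁ : ℕ) (hq : q = (f₁ + 1) / nf₂) (hr : r = (f₁ + 1) % nf₂)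
    (hσ : σ₁ = q * n₂ + r + f₂ * (if 0 < r then 1 else 0))
    (C₁ : Finset ι) (C₂ : Finset κ) (hC₁ : C₁.card = n₁) (hC₂ : C₂.card = n₂)
    (M : Multiset (ι × κ)) (hM : ∀ p ∈ M, p.1 ∈ C₁ ∧ p.2 ∈ C₂)
    (hcard : Multiset.card M = σ₁ - 1) :
    ∃ (F₂ : Finset κ) (F₁ : Finset ι), F₂ ⊆ C₂ ∧ F₂.card = f₂ ∧
      F₁ ⊆ C₁ ∧ F₁.card ≤ f₁ ∧ ∀ p ∈ M, p.2 ∈ F₂ ∨ p.1 ∈ F₁ := by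
  -- basic arithmetic facts
  have hdm : nf₂ * q + r = f₁ + 1 := by
    rw [hq, hr]; exact Nat.div_add_mod _ _
  set s : ℕ := if 0 < r then 1 else 0 with hs
  -- σ₁ = (f₁ + 1) + f₂ * (q + s)
  have hσ' : σ₁ = (f₁ + 1) + f₂ * (q + s) := by
    calc σ₁ = q * (f₂ + nf₂) + r + f₂ * s := by rw [hσ, ← hn₂]
      _ = (nf₂ * q + r) + f₂ * (q + s) := by ring
      _ = (f₁ + 1) + f₂ * (q + s) := by rw [hdm]
  have hqs1 : 1 ≤ q + s := by
    rcases Nat.eq_zero_or_pos r with h0 | hp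
    · have hq0 : q ≠ 0 := by
        intro h
        rw [h] at hdm
        omega
      omega
    · have : s = 1 := by simp [hs, hp]
      omega
  -- receiver multiset and counts
  set N : Multiset κ := M.map Prod.snd with hN
  set c : κ → ℕ := fun y => N.count y with hc
  have hNmem : ∀ y ∈ N, y ∈ C₂ := by
    intro y hy
    rw [hN, Multiset.mem_map] at hy
    obtain ⟨p, hp, rfl⟩ := hy
    exact (hM p hp).2
  -- total count over C₂ equals card M
  have hsum : ∑ y ∈ C₂, c y = Multiset.card M := by
    have h1 : ∑ y ∈ N.toFinset, N.count y = Multiset.card N :=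
      Multiset.toFinset_sum_count_eq N
    have hsub : N.toFinset ⊆ C₂ := by
      intro y hy
      exact hNmem y (Multiset.mem_toFinset.mp hy)
    have h2 : ∑ y ∈ N.toFinset, c y = ∑ y ∈ C₂, c y := by
      apply Finset.sum_subset hsub
      intro y _ hy
      simp only [hc]
      exact Multiset.count_eq_zero.mpr (fun h => hy (Multiset.mem_toFinset.mpr h))
    rw [← h2]
    simpa [hN, hc] using h1
  -- choose F₂ as the top f₂ receivers
  have hf₂le : f₂ ≤ C₂.card := by rw [hC₂, hn₂]; omega
  obtain ⟨F₂, hF₂sub, hF₂card, hF₂top⟩ := exists_top_subset c f₂ C₂ hf₂le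
  set B : Finset κ := C₂ \ F₂ with hB
  have hBcard : B.card = nf₂ := by
    rw [hB, Finset.card_sdiff_of_subset hF₂sub, hC₂, hF₂card, hn₂]; omega
  -- key claim: total messages to B is at most f₁
  have hT : ∑ y ∈ B, c y ≤ f₁ := by
    by_contra hcon
    push_neg at hcon
    -- some receiver in B gets at least q + s messages
    have hex : ∃ y ∈ B, q + s ≤ c y := by
      by_contra hall
      push_neg at hall
      have hub : ∀ y ∈ B, c y ≤ q + s - 1 := by
        intro y hy
        have := hall y hy
        omega
      have hle : ∑ y ∈ B, c y ≤ B.card * (q + s - 1) :=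
        Finset.sum_le_card_nsmul B c (q + s - 1) hub
      rw [hBcard] at hle
      have hexp : nf₂ * (q + s) = nf₂ * (q + s - 1) + nf₂ := by
        have h1 : q + s = (q + s - 1) + 1 := by omega
        conv_lhs => rw [h1]
        rw [Nat.mul_succ]
      have hcases : nf₂ * (q + s) ≤ f₁ + nf₂ := by
        rcases Nat.eq_zero_or_pos r with hr0 | hrpos
        · have hs0 : s = 0 := by simp [hs, hr0]
          have h2 : nf₂ * q = f₁ + 1 := by omega
          rw [hs0, Nat.add_zero]
          linarith
        · have hs1 : s = 1 := by simp [hs, hrpos]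
          have h2 : nf₂ * (q + s) = nf₂ * q + nf₂ := by rw [hs1, Nat.mul_succ]
          linarith
      linarith
    obtain ⟨y, hyB, hyc⟩ := hex
    -- every top receiver also gets at least q + s messages
    have hFlb : ∀ x ∈ F₂, q + s ≤ c x := fun x hx =>
      le_trans hyc (hF₂top x hx y hyB)
    have hFsum : f₂ * (q + s) ≤ ∑ x ∈ F₂, c x := by
      have := Finset.card_nsmul_le_sum F₂ c (q + s) hFlb
      rw [hF₂card] at this
      simpa [smul_eq_mul] using this
    have hsplit : ∑ y ∈ B, c y + ∑ x ∈ F₂, c x = ∑ y ∈ C₂, c y :=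
      Finset.sum_sdiff hF₂sub
    have : σ₁ ≤ Multiset.card M := by
      rw [← hsum, ← hsplit, hσ']
      have : f₁ + 1 ≤ ∑ y ∈ B, c y := hcon
      linarith
    omega
  -- define F₁ as the senders of messages to B
  classical
  set M' : Multiset (ι × κ) := M.filter (fun p => p.2 ∈ B) with hM'
  set F₁ : Finset ι := M'.toFinset.image Prod.fst with hF₁
  -- card of M' is the sum of counts over B
  have hM'card : Multiset.card M' ≤ f₁ := by
    have hmap : M'.map Prod.snd = N.filter (fun y => y ∈ B) := by
      rw [hM', hN, Multiset.filter_map]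
      simp [Function.comp_def]
    have h1 : Multiset.card M' = Multiset.card (N.filter (fun y => y ∈ B)) := by
      rw [← hmap, Multiset.card_map]
    have h2 : Multiset.card (N.filter (fun y => y ∈ B)) = ∑ y ∈ B, c y := by
      have ht := Multiset.toFinset_sum_count_eq (N.filter (fun y => y ∈ B))
      have hsub : (N.filter (fun y => y ∈ B)).toFinset ⊆ B := by
        intro y hy
        rw [Multiset.mem_toFinset, Multiset.mem_filter] at hy
        exact hy.2
      have h3 : ∑ y ∈ (N.filter (fun y => y ∈ B)).toFinset,
          (N.filter (fun y => y ∈ B)).count y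
          = ∑ y ∈ B, (N.filter (fun y => y ∈ B)).count y := by
        apply Finset.sum_subset hsub
        intro y _ hy
        exact Multiset.count_eq_zero.mpr (fun h => hy (Multiset.mem_toFinset.mpr h))
      rw [h3] at ht
      rw [← ht]
      apply Finset.sum_congr rfl
      intro y hy
      rw [Multiset.count_filter]
      simp [hy, hc]
    rw [h1, h2]; exact hT
  refine ⟨F₂, F₁, hF₂sub, hF₂card, ?_, ?_, ?_⟩
  · -- F₁ ⊆ C₁
    intro x hx
    rw [hF₁, Finset.mem_image] at hx
    obtain ⟨p, hp, rfl⟩ := hx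
    rw [Multiset.mem_toFinset, hM', Multiset.mem_filter] at hp
    exact (hM p hp.1).1
  · -- F₁.card ≤ f₁
    calc F₁.card ≤ M'.toFinset.card := Finset.card_image_le
      _ ≤ Multiset.card M' := Multiset.toFinset_card_le M'
      _ ≤ f₁ := hM'card
  · -- coverage
    intro p hp
    by_cases hpF : p.2 ∈ F₂
    · exact Or.inl hpF
    · right
      have hpB : p.2 ∈ B := by
        rw [hB, Finset.mem_sdiff]
        exact ⟨(hM p hp).2, hpF⟩
      rw [hF₁, Finset.mem_image]
      exact ⟨p, Multiset.mem_toFinset.mpr (Multiset.mem_filter.mpr ⟨hp, hpB⟩), rfl⟩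
end

section
/- Let nf₂ ≥ 1, f₁, f₂ ≥ 0, q = (2·f₁+1)/nf₂, r = (2·f₁+1) mod nf₂, and τ₁ = q·(f₂+nf₂) + r + f₂·sgn(r). For every multiset C of certificates, each with a receiver among the f₂+nf₂ receivers, with |C| = τ₁ − 1, if F₂ denotes a set of f₂ top receivers (each receiving at least as many certificates as any receiver outside F₂), then the number of certificates received outside F₂ is at most 2·f₁; consequently these can be split into two groups each signed by at most f₁ distinct senders. -/
lemma card_filter_mem' {κ : Type*} [DecidableEq κ] (s : Multiset κ) (t : Finset κ) :
    Multiset.card (s.filter (· ∈ t)) = ∑ y ∈ t, s.count y := by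
  induction s using Multiset.induction with
  | empty => simp
  | cons a s ih =>
    by_cases ha : a ∈ t <;>
      simp [Multiset.filter_cons, ha, ih, Multiset.count_cons, Finset.sum_add_distrib,
        Finset.sum_ite_eq', add_comm]

lemma split_small {σ : Type*} [DecidableEq σ] (f₁ : ℕ) (D : Multiset σ)
    (h : Multiset.card D ≤ 2 * f₁) :
    ∃ A B : Multiset σ, A + B = D ∧ Multiset.card A ≤ f₁ ∧ Multiset.card B ≤ f₁ := by
  refine ⟨(D.toList.take f₁ : List σ), (D.toList.drop f₁ : List σ), ?_, ?_, ?_⟩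
  · conv_rhs => rw [← Multiset.coe_toList D, ← List.take_append_drop f₁ D.toList]
    rw [Multiset.coe_add]
  · simp
  · simp only [Multiset.coe_card, List.length_drop]
    have : D.toList.length = Multiset.card D := by simp
    omega

/-- counting core of Theorem 4.2(1). -/
theorem stmt_13 {σ κ : Type*} [DecidableEq σ] [DecidableEq κ]
    (f₁ f₂ nf₂ : ℕ) (hnf : 1 ≤ nf₂)
    (q r τ₁ : ℕ) (hq : q = (2 * f₁ + 1) / nf₂) (hr : r = (2 * f₁ + 1) % nf₂)
    (hτ : τ₁ = q * (f₂ + nf₂) + r + f₂ * (if 0 < r then 1 else 0))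
    (Rcv : Finset κ) (hRcv : Rcv.card = f₂ + nf₂)
    (F₂ : Finset κ) (hF₂ : F₂ ⊆ Rcv) (hf₂ : F₂.card = f₂)
    (C : Multiset (σ × κ)) (hC : ∀ p ∈ C, p.2 ∈ Rcv)
    (hcard : Multiset.card C = τ₁ - 1)
    (htop : ∀ x ∈ F₂, ∀ y ∈ Rcv \ F₂,
      (C.map Prod.snd).count y ≤ (C.map Prod.snd).count x) :
    Multiset.card (C.filter (fun p => p.2 ∉ F₂)) ≤ 2 * f₁ ∧
      ∃ C₁' C₂' : Multiset (σ × κ), C₁' + C₂' = C.filter (fun p => p.2 ∉ F₂) ∧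
        (C₁'.map Prod.fst).toFinset.card ≤ f₁ ∧
        (C₂'.map Prod.fst).toFinset.card ≤ f₁ := by

  classical
  set s := C.map Prod.snd with hs
  set D := C.filter (fun p => p.2 ∉ F₂) with hD
  -- rewrite D's card as a sum of counts over Rcv \ F₂
  have hDfilt : D = C.filter (fun p => p.2 ∈ Rcv \ F₂) := by
    apply Multiset.filter_congr
    intro p hp
    have := hC p hp
    simp [Finset.mem_sdiff, this]
  have hcardD : Multiset.card D = ∑ y ∈ Rcv \ F₂, s.count y := by
    rw [← card_filter_mem' s (Rcv \ F₂), hDfilt, hs]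
    rw [Multiset.filter_map]
    simp [Function.comp]
  have hsub : s.toFinset ⊆ Rcv := by
    intro y hy
    rw [Multiset.mem_toFinset, hs] at hy
    obtain ⟨p, hp, rfl⟩ := Multiset.mem_map.mp hy
    exact hC p hp
  have hsumall : ∑ y ∈ Rcv, s.count y = Multiset.card C := by
    rw [← Finset.sum_subset hsub (fun y _ hy => Multiset.count_eq_zero.mpr
      (fun h => hy (Multiset.mem_toFinset.mpr h)))]
    rw [Multiset.toFinset_sum_count_eq, hs, Multiset.card_map]
  have hsplitsum : ∑ y ∈ F₂, s.count y + ∑ y ∈ Rcv \ F₂, s.count y = Multiset.card C := by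
    rw [add_comm, Finset.sum_sdiff hF₂, hsumall]
  have hcardsd : (Rcv \ F₂).card = nf₂ := by
    rw [Finset.card_sdiff_of_subset hF₂, hRcv, hf₂]; omega
  have hdm : nf₂ * q + r = 2 * f₁ + 1 := by
    rw [hq, hr]; exact Nat.div_add_mod _ _
  set g : ℕ := if 0 < r then 1 else 0 with hg
  set k : ℕ := q + g with hk
  have hτ₁eq : τ₁ = f₂ * k + (2 * f₁ + 1) := by
    rw [hτ, ← hdm, hk, hg]; ring
  -- main bound
  have h1 : Multiset.card D ≤ 2 * f₁ := by
    by_contra hcon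
    push_neg at hcon
    have hm : 2 * f₁ + 1 ≤ ∑ y ∈ Rcv \ F₂, s.count y := by
      rw [← hcardD]; omega
    have hex : ∃ y ∈ Rcv \ F₂, k ≤ s.count y := by
      by_contra hall
      push_neg at hall
      have hle : ∀ y ∈ Rcv \ F₂, s.count y ≤ k - 1 := fun y hy => by
        have := hall y hy; omega
      have hsum : ∑ y ∈ Rcv \ F₂, s.count y ≤ nf₂ * (k - 1) := by
        calc ∑ y ∈ Rcv \ F₂, s.count y ≤ (Rcv \ F₂).card • (k - 1) :=
              Finset.sum_le_card_nsmul _ _ _ hle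
          _ = nf₂ * (k - 1) := by rw [hcardsd, smul_eq_mul]
      by_cases hrpos : 0 < r
      · have hg1 : g = 1 := by rw [hg, if_pos hrpos]
        have : nf₂ * (k - 1) = nf₂ * q := by rw [hk, hg1, Nat.add_sub_cancel]
        omega
      · have hg0 : g = 0 := by rw [hg, if_neg hrpos]
        have hr0 : r = 0 := by omega
        have hq1 : 1 ≤ q := by
          by_contra hq0
          push_neg at hq0
          interval_cases q
          omega
        have : nf₂ * (k - 1) + nf₂ = nf₂ * q := by
          rw [hk, hg0]
          have : q + 0 - 1 + 1 = q := by omega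
          rw [← Nat.mul_succ, Nat.succ_eq_add_one, this]
        omega
    obtain ⟨y, hy, hky⟩ := hex
    have hF2sum : f₂ * k ≤ ∑ x ∈ F₂, s.count x := by
      calc f₂ * k = F₂.card • k := by rw [hf₂, smul_eq_mul]
        _ ≤ ∑ x ∈ F₂, s.count x :=
          Finset.card_nsmul_le_sum _ _ _ (fun x hx => le_trans hky (htop x hx y hy))
    have htot : f₂ * k + (2 * f₁ + 1) ≤ Multiset.card C := by
      rw [← hsplitsum]
      exact Nat.add_le_add hF2sum hm
    rw [hcard, hτ₁eq] at htot
    omega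
  refine ⟨h1, ?_⟩
  obtain ⟨A, B, hAB, hA, hB⟩ := split_small f₁ D h1
  exact ⟨A, B, hAB, le_trans (Multiset.toFinset_card_le _)
      (by rw [Multiset.card_map]; exact hA),
    le_trans (Multiset.toFinset_card_le _) (by rw [Multiset.card_map]; exact hB)⟩
end

section
/- Let f₁, f₂, nf₁ be naturals with nf₁ > f₁, q = (f₂+1)/(nf₁ − f₁), r = (f₂+1) mod (nf₁ − f₁), τ₂ = q·(f₁+nf₁) + r + 2·f₁·sgn(r). For any multiset C of certificates with signers among the f₁+nf₁ senders and |C| = τ₂ − 1, let R be a set of 2·f₁ top signers (each signing at least as many certificates in C as any signer outside R). Then the number of certificates signed outside R is at most f₂, and R can be partitioned into two sets of f₁ signers each. -/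
/-- counting core of Theorem 4.2(2). -/
theorem stmt_14 {σ : Type*} [DecidableEq σ]
    (f₁ f₂ nf₁ : ℕ) (hnf : f₁ < nf₁)
    (q r τ₂ : ℕ) (hq : q = (f₂ + 1) / (nf₁ - f₁)) (hr : r = (f₂ + 1) % (nf₁ - f₁))
    (hτ : τ₂ = q * (f₁ + nf₁) + r + 2 * f₁ * (if 0 < r then 1 else 0))
    (Sgn : Finset σ) (hSgn : Sgn.card = f₁ + nf₁)
    (R : Finset σ) (hR : R ⊆ Sgn) (hRcard : R.card = 2 * f₁)
    (C : Multiset σ) (hC : ∀ x ∈ C, x ∈ Sgn)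
    (hcard : Multiset.card C = τ₂ - 1)
    (htop : ∀ x ∈ R, ∀ y ∈ Sgn \ R, C.count y ≤ C.count x) :
    Multiset.card (C.filter (· ∉ R)) ≤ f₂ ∧
      ∃ R₁ R₂ : Finset σ, Disjoint R₁ R₂ ∧ R₁ ∪ R₂ = R ∧
        R₁.card = f₁ ∧ R₂.card = f₁ := by
  have hsplit : ∃ R₁ R₂ : Finset σ, Disjoint R₁ R₂ ∧ R₁ ∪ R₂ = R ∧
      R₁.card = f₁ ∧ R₂.card = f₁ := by
    obtain ⟨R₁, hsub, hcard₁⟩ := Finset.exists_subset_card_eq (s := R) (n := f₁) (by omega)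
    refine ⟨R₁, R \ R₁, Finset.disjoint_sdiff, Finset.union_sdiff_of_subset hsub,
      hcard₁, ?_⟩
    rw [Finset.card_sdiff_of_subset hsub, hRcard, hcard₁]
    omega
  set d := nf₁ - f₁ with hd
  have hdpos : 0 < d := by omega
  have hdiv : q * d + r = f₂ + 1 := by
    rw [hq, hr]
    exact Nat.div_add_mod' _ _
  set k := q + (if 0 < r then 1 else 0) with hk
  have hkpos : 0 < k := by
    rcases Nat.eq_zero_or_pos r with h0 | h0
    · have : 0 < q := by
        rcases Nat.eq_zero_or_pos q with hq0 | hq0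
        · simp [hq0, h0] at hdiv
        · exact hq0
      simp [hk, h0]; omega
    · simp [hk, h0]
  have hτ' : τ₂ = f₂ + 1 + 2 * f₁ * k := by
    have hnf' : nf₁ = f₁ + d := by omega
    have e1 : q * (f₁ + nf₁) = 2 * f₁ * q + q * d := by rw [hnf']; ring
    rw [hτ, hk]
    rcases Nat.eq_zero_or_pos r with h0 | h0
    · rw [if_neg (by omega), e1]; linarith [hdiv]
    · rw [if_pos h0, e1]; linarith [hdiv]
  refine ⟨?_, hsplit⟩
  by_contra hO
  push_neg at hO
  set O := C.filter (· ∉ R) with hOdef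
  have hOmem : ∀ y, y ∈ O → y ∈ Sgn \ R := by
    intro y hy
    rw [hOdef, Multiset.mem_filter] at hy
    exact Finset.mem_sdiff.mpr ⟨hC y hy.1, hy.2⟩
  have hOsum : Multiset.card O = ∑ y ∈ Sgn \ R, O.count y := by
    rw [← Multiset.toFinset_sum_count_eq]
    exact Finset.sum_subset
      (fun y hy => hOmem y (Multiset.mem_toFinset.mp hy))
      (fun y _ hy => Multiset.count_eq_zero_of_notMem
        (fun h => hy (Multiset.mem_toFinset.mpr h)))
  have hcardSR : (Sgn \ R).card = d := by
    rw [Finset.card_sdiff_of_subset hR, hSgn, hRcard]; omega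
  -- pigeonhole: some y outside R with O.count y ≥ k
  have hpig : ∃ y ∈ Sgn \ R, k ≤ O.count y := by
    by_contra hc
    push_neg at hc
    have hle : ∑ y ∈ Sgn \ R, O.count y ≤ (Sgn \ R).card * (k - 1) := by
      calc ∑ y ∈ Sgn \ R, O.count y ≤ ∑ _y ∈ Sgn \ R, (k - 1) :=
            Finset.sum_le_sum (fun y hy => by have := hc y hy; omega)
        _ = (Sgn \ R).card * (k - 1) := by rw [Finset.sum_const, smul_eq_mul]
    rw [hcardSR] at hle
    rw [← hOsum] at hle
    have h1 : f₂ + 1 ≤ d * (k - 1) := by omega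
    rcases Nat.eq_zero_or_pos r with h0 | h0
    · have hkq : k = q := by simp [hk, h0]
      have hqpos : 0 < q := by
        rcases Nat.eq_zero_or_pos q with hq0 | hq0
        · simp [hq0, h0] at hdiv
        · exact hq0
      obtain ⟨q', rfl⟩ : ∃ q', q = q' + 1 := ⟨q - 1, by omega⟩
      rw [hkq] at h1
      simp only [Nat.add_sub_cancel] at h1
      have e2 : (q' + 1) * d = q' * d + d := by ring
      rw [e2] at hdiv
      linarith
    · have hkq : k = q + 1 := by simp [hk, h0]
      rw [hkq] at h1
      simp only [Nat.add_sub_cancel] at h1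
      linarith [hdiv]
  obtain ⟨y, hySR, hyk⟩ := hpig
  have hyC : k ≤ C.count y :=
    le_trans hyk (Multiset.count_le_of_le y (Multiset.filter_le _ _))
  have hRk : ∀ x ∈ R, k ≤ C.count x := fun x hx =>
    le_trans hyC (htop x hx y hySR)
  -- total count
  have hCsum : Multiset.card C = ∑ x ∈ Sgn, C.count x := by
    rw [← Multiset.toFinset_sum_count_eq]
    exact Finset.sum_subset
      (fun x hx => hC x (Multiset.mem_toFinset.mp hx))
      (fun x _ hx => Multiset.count_eq_zero_of_notMem
        (fun h => hx (Multiset.mem_toFinset.mpr h)))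
  have hsplitsum : ∑ x ∈ Sgn \ R, C.count x + ∑ x ∈ R, C.count x = ∑ x ∈ Sgn, C.count x :=
    Finset.sum_sdiff hR
  have hRsum : 2 * f₁ * k ≤ ∑ x ∈ R, C.count x := by
    calc 2 * f₁ * k = ∑ _x ∈ R, k := by rw [Finset.sum_const, smul_eq_mul, hRcard]
      _ ≤ ∑ x ∈ R, C.count x := Finset.sum_le_sum hRk
  have hOut : f₂ + 1 ≤ ∑ x ∈ Sgn \ R, C.count x := by
    have : Multiset.card O ≤ ∑ x ∈ Sgn \ R, C.count x := by
      rw [hOsum]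
      exact Finset.sum_le_sum (fun x _ =>
        Multiset.count_le_of_le x (Multiset.filter_le _ _))
    omega
  have : τ₂ ≤ Multiset.card C := by
    rw [hCsum, ← hsplitsum, hτ']
    omega
  omega
end

section
/- Let f₂, nf₂ be naturals with nf₂ ≥ 1, n₂ = f₂ + nf₂ ≥ 3·f₂ + 1, and f₁ with n₁ = f₁ + nf₁ ≥ 3·f₁ + 1 and n₁ ≥ n₂. Let q = (f₁+1)/nf₂, r = (f₁+1) mod nf₂, σ₁ = q·n₂ + r + f₂·sgn(r). Then σ₁ ≤ n₁, i.e., the crash-failure lower bound never exceeds the size of the larger cluster when both clusters satisfy n > 3f. -/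
/-- feasibility of SPBS-(σ₁, bcs) under n > 3f. -/
theorem stmt_18 (f₁ nf₁ f₂ nf₂ n₁ n₂ : ℕ) (hnf₂ : 1 ≤ nf₂)
    (hn₂ : n₂ = f₂ + nf₂) (h₂ : 3 * f₂ + 1 ≤ n₂)
    (hn₁ : n₁ = f₁ + nf₁) (h₁ : 3 * f₁ + 1 ≤ n₁) (hsize : n₂ ≤ n₁)
    (q r σ₁ : ℕ) (hq : q = (f₁ + 1) / nf₂) (hr : r = (f₁ + 1) % nf₂)
    (hσ : σ₁ = q * n₂ + r + f₂ * (if 0 < r then 1 else 0)) :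
    σ₁ ≤ n₁ := by
  have hd : q * nf₂ + r = f₁ + 1 := by
    rw [hq, hr]; exact Nat.div_add_mod' _ _
  have hlt : r < nf₂ := by rw [hr]; exact Nat.mod_lt _ (by omega)
  have h2f : 2 * f₂ + 1 ≤ nf₂ := by omega
  have hmul : (q + 1) * (2 * f₂ + 1) ≤ (q + 1) * nf₂ :=
    Nat.mul_le_mul_left _ h2f
  subst hn₂ hn₁ hσ
  by_cases hr0 : 0 < r
  · rw [if_pos hr0]
    rcases Nat.eq_zero_or_pos q with hq0 | hq1
    · subst hq0; simp at hd ⊢; omega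
    · have hnle : nf₂ ≤ q * nf₂ := Nat.le_mul_of_pos_left _ hq1
      nlinarith [hmul, hd, hlt, h₁]
  · rw [if_neg hr0]
    have hr0' : r = 0 := by omega
    subst hr0'
    have hq1 : 1 ≤ q := by
      rcases Nat.eq_zero_or_pos q with h | h
      · subst h; simp at hd
      · exact h
    have hmul2 : q * (2 * f₂ + 1) ≤ q * nf₂ := Nat.mul_le_mul_left _ h2f
    nlinarith [hd, h₁]
end

section
/- Let n₂ = f₂ + nf₂ with nf₂ ≥ 1 and n₂ > 3·f₂, and n₁ = f₁ + nf₁ with n₁ > 3·f₁ and n₂ ≥ n₁. Let q = (f₂+1)/nf₁ with nf₁ ≥ 1, r = (f₂+1) mod nf₁, σ₂ = q·n₁ + r + f₁·sgn(r). Then σ₂ ≤ n₂. -/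
/-- feasibility of RPBS-(σ₂, bcs) under n > 3f. -/
theorem stmt_19 (f₁ nf₁ f₂ nf₂ n₁ n₂ : ℕ) (hnf₂ : 1 ≤ nf₂) (hnf₁ : 1 ≤ nf₁)
    (hn₂ : n₂ = f₂ + nf₂) (h₂ : 3 * f₂ < n₂)
    (hn₁ : n₁ = f₁ + nf₁) (h₁ : 3 * f₁ < n₁) (hsize : n₁ ≤ n₂)
    (q r σ₂ : ℕ) (hq : q = (f₂ + 1) / nf₁) (hr : r = (f₂ + 1) % nf₁)
    (hσ : σ₂ = q * n₁ + r + f₁ * (if 0 < r then 1 else 0)) :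
    σ₂ ≤ n₂ := by
  have hdiv : q * nf₁ + r = f₂ + 1 := by
    rw [hq, hr, mul_comm]; exact Nat.div_add_mod _ _
  have hrlt : r < nf₁ := hr ▸ Nat.mod_lt _ hnf₁
  have hA : 2 * f₁ + 1 ≤ nf₁ := by omega
  have hB : 2 * f₂ + 1 ≤ nf₂ := by omega
  subst hσ hn₁ hn₂
  rcases Nat.eq_zero_or_pos r with hr0 | hr0
  · -- r = 0 : σ₂ = q * f₁ + (f₂ + 1); need q * f₁ < nf₂
    subst hr0
    simp only [lt_self_iff_false, if_false, mul_zero, add_zero]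
    have h1 : q * (2 * f₁ + 1) ≤ q * nf₁ := Nat.mul_le_mul_left q hA
    have h2 : q * (f₁ + nf₁) = q * f₁ + q * nf₁ := by ring
    nlinarith
  · rw [if_pos hr0, mul_one]
    have h1 : q * (2 * f₁ + 1) ≤ q * nf₁ := Nat.mul_le_mul_left q hA
    have h2 : q * (f₁ + nf₁) = q * f₁ + q * nf₁ := by ring
    rcases Nat.eq_zero_or_pos q with hq0 | hq0
    · subst hq0; simp only [zero_mul, zero_add] at *; omega
    · have h3 : nf₁ ≤ q * nf₁ := Nat.le_mul_of_pos_left _ hq0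
      nlinarith
end
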